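/- arXiv:1104.5656 — 4 statements merged into one kernel-verified Lean document; each statement's English description precedes it below -/
import Mathlib

section
/- Let 0 < α < π/2 and 0 < r < 1 with sin α ≤ r ≤ cos α, and let ρ := √(1 - r²). Suppose C ⊆ R^n is compact with rB^n ⊆ C ⊆ B^n, and v, w are nonzero vectors making angle α. Then slos(v,w) ≤ 2ρ sin α / (r(1 + cos α) + ρ sin α). -/
open scoped RealInnerProductSpace Pointwise

noncomputable def maxC {n : ℕ} (C : Set (EuclideanSpace ℝ (Fin n)))
    (v : EuclideanSpace ℝ (Fin n)) : ℝ :=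
  sSup ((fun x => ⟪v, x⟫) '' C)

noncomputable def minC {n : ℕ} (C : Set (EuclideanSpace ℝ (Fin n)))
    (v : EuclideanSpace ℝ (Fin n)) : ℝ :=
  sInf ((fun x => ⟪v, x⟫) '' C)

noncomputable def ranC {n : ℕ} (C : Set (EuclideanSpace ℝ (Fin n)))
    (v : EuclideanSpace ℝ (Fin n)) : ℝ :=
  maxC C v - minC C v

noncomputable def losC {n : ℕ} (C : Set (EuclideanSpace ℝ (Fin n)))
    (v w : EuclideanSpace ℝ (Fin n)) : ℝ :=
  maxC C w - sInf ((fun x => ⟪w, x⟫) '' {x ∈ C | ⟪v, x⟫ = maxC C v})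

noncomputable def slosC {n : ℕ} (C : Set (EuclideanSpace ℝ (Fin n)))
    (v w : EuclideanSpace ℝ (Fin n)) : ℝ :=
  losC C v w / ranC C w

lemma ptBound {n : ℕ} (c s : ℝ) (hs : 0 ≤ s) (hcs : c^2 + s^2 = 1)
    (v w x : EuclideanSpace ℝ (Fin n)) (hv1 : ‖v‖ = 1) (hw1 : ‖w‖ = 1)
    (hangle : ⟪v, w⟫ = c) (hx : ‖x‖ ≤ 1) :
    |⟪w, x⟫ - c * ⟪v, x⟫| ≤ s * Real.sqrt (1 - ⟪v, x⟫^2) := by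
  set p := ⟪v, x⟫ with hp
  have hwv : ⟪w, v⟫ = c := by rw [real_inner_comm]; exact hangle
  have hxv : ⟪x, v⟫ = p := by rw [real_inner_comm]
  have h1 : ⟪w - c • v, x - p • v⟫ = ⟪w, x⟫ - c * p := by
    simp only [inner_sub_left, inner_sub_right, real_inner_smul_left, real_inner_smul_right,
      hwv, hxv, real_inner_self_eq_norm_sq, hv1, ← hp]
    ring
  have hA : ‖w - c • v‖ = s := by
    have h2 : ‖w - c • v‖^2 = s^2 := by
      rw [norm_sub_sq_real, real_inner_smul_right, hwv, norm_smul, hv1, hw1]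
      rw [Real.norm_eq_abs]
      rw [mul_one, sq_abs]
      nlinarith
    calc ‖w - c • v‖ = Real.sqrt (‖w - c • v‖^2) := (Real.sqrt_sq (norm_nonneg _)).symm
      _ = Real.sqrt (s^2) := by rw [h2]
      _ = s := Real.sqrt_sq hs
  have hB : ‖x - p • v‖ ≤ Real.sqrt (1 - p^2) := by
    have h2 : ‖x - p • v‖^2 ≤ 1 - p^2 := by
      rw [norm_sub_sq_real, real_inner_smul_right, hxv, norm_smul, hv1, Real.norm_eq_abs]
      rw [mul_one, sq_abs]
      nlinarith [norm_nonneg x]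
    calc ‖x - p • v‖ = Real.sqrt (‖x - p • v‖^2) := (Real.sqrt_sq (norm_nonneg _)).symm
      _ ≤ Real.sqrt (1 - p^2) := Real.sqrt_le_sqrt h2
  calc |⟪w, x⟫ - c * p| = |⟪w - c • v, x - p • v⟫| := by rw [h1]
    _ ≤ ‖w - c • v‖ * ‖x - p • v‖ := abs_real_inner_le_norm _ _
    _ ≤ s * Real.sqrt (1 - p^2) := by
        rw [hA]; exact mul_le_mul_of_nonneg_left hB hs

lemma monoCS (c s p t : ℝ) (hs : 0 ≤ s) (hc : 0 ≤ c) (hcs : c^2 + s^2 = 1)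
    (hp : -1 ≤ p) (hpt : p ≤ t) (htc : t ≤ c) :
    c * p + s * Real.sqrt (1 - p^2) ≤ c * t + s * Real.sqrt (1 - t^2) := by
  have hc1 : c ≤ 1 := by nlinarith
  have hp2 : 1 - p^2 ≥ 0 := by nlinarith
  have ht2 : 1 - t^2 ≥ 0 := by nlinarith
  set q1 := Real.sqrt (1 - p^2) with hq1
  set q2 := Real.sqrt (1 - t^2) with hq2
  have hq1n : 0 ≤ q1 := Real.sqrt_nonneg _
  have hq2n : 0 ≤ q2 := Real.sqrt_nonneg _
  have hq1sq : q1^2 = 1 - p^2 := Real.sq_sqrt hp2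
  have hq2sq : q2^2 = 1 - t^2 := Real.sq_sqrt ht2
  rcases le_or_gt q1 q2 with h | h
  · nlinarith
  · have hpt2 : p^2 < t^2 := by nlinarith
    have ht0 : 0 < t := by nlinarith
    have hst : s * t ≤ c * q2 := by
      have hsq : (s*t)^2 ≤ (c*q2)^2 := by nlinarith
      nlinarith [mul_nonneg hs ht0.le, mul_nonneg hc hq2n]
    have hsp : s * p ≤ c * q1 := by
      rcases le_or_gt p 0 with hp0 | hp0
      · nlinarith [mul_nonneg hc hq1n]
      · have hsq : (s*p)^2 ≤ (c*q1)^2 := by nlinarith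
        nlinarith [mul_nonneg hs hp0.le, mul_nonneg hc hq1n]
    have hsum : 0 < q1 + q2 := by linarith
    have e : s*(q1-q2)*(q1+q2) = s*(t-p)*(t+p) := by
      linear_combination s * hq1sq - s * hq2sq
    have h6 : s*(t+p) ≤ c*(q1+q2) := by linarith
    have key0 := mul_le_mul_of_nonneg_right h6 (sub_nonneg.2 hpt)
    have key : s*(q1-q2)*(q1+q2) ≤ c*(t-p)*(q1+q2) := by linarith [e, key0]
    have : s*(q1-q2) ≤ c*(t-p) := (mul_le_mul_iff_left₀ hsum).1 key
    linarith

lemma image_inner_smul {n : ℕ} (a : ℝ) (u : EuclideanSpace ℝ (Fin n))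
    (S : Set (EuclideanSpace ℝ (Fin n))) :
    (fun x => ⟪a • u, x⟫) '' S = a • ((fun x => ⟪u, x⟫) '' S) := by
  ext y
  constructor
  · rintro ⟨x, hx, rfl⟩
    exact ⟨⟪u, x⟫, ⟨x, hx, rfl⟩, by simp only [smul_eq_mul]; rw [real_inner_smul_left]⟩
  · rintro ⟨b, ⟨x, hx, rfl⟩, rfl⟩
    refine ⟨x, hx, ?_⟩
    show ⟪a • u, x⟫ = a • ⟪u, x⟫
    rw [real_inner_smul_left, smul_eq_mul]

lemma sSup_inner_smul {n : ℕ} (a : ℝ) (ha : 0 ≤ a) (u : EuclideanSpace ℝ (Fin n))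
    (S : Set (EuclideanSpace ℝ (Fin n))) :
    sSup ((fun x => ⟪a • u, x⟫) '' S) = a * sSup ((fun x => ⟪u, x⟫) '' S) := by
  rw [image_inner_smul, Real.sSup_smul_of_nonneg ha, smul_eq_mul]

lemma sInf_inner_smul {n : ℕ} (a : ℝ) (ha : 0 ≤ a) (u : EuclideanSpace ℝ (Fin n))
    (S : Set (EuclideanSpace ℝ (Fin n))) :
    sInf ((fun x => ⟪a • u, x⟫) '' S) = a * sInf ((fun x => ⟪u, x⟫) '' S) := by
  rw [image_inner_smul, Real.sInf_smul_of_nonneg ha, smul_eq_mul]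

lemma maxC_smul {n : ℕ} (C : Set (EuclideanSpace ℝ (Fin n)))
    (v : EuclideanSpace ℝ (Fin n)) (a : ℝ) (ha : 0 ≤ a) :
    maxC C (a • v) = a * maxC C v :=
  sSup_inner_smul a ha v C

lemma face_smul {n : ℕ} (C : Set (EuclideanSpace ℝ (Fin n)))
    (v : EuclideanSpace ℝ (Fin n)) (a : ℝ) (ha : 0 < a) :
    {x ∈ C | ⟪a • v, x⟫ = maxC C (a • v)} = {x ∈ C | ⟪v, x⟫ = maxC C v} := by
  have hm : maxC C (a • v) = a * maxC C v := maxC_smul C v a ha.le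
  ext x
  have hi : ⟪a • v, x⟫ = a * ⟪v, x⟫ := real_inner_smul_left v x a
  simp only [Set.mem_setOf_eq, hi, hm]
  constructor
  · rintro ⟨h1, h2⟩
    exact ⟨h1, mul_left_cancel₀ ha.ne' h2⟩
  · rintro ⟨h1, h2⟩
    exact ⟨h1, by rw [h2]⟩

lemma slosC_smul {n : ℕ} (C : Set (EuclideanSpace ℝ (Fin n)))
    (v w : EuclideanSpace ℝ (Fin n)) (a b : ℝ) (ha : 0 < a) (hb : 0 < b) :
    slosC C (a • v) (b • w) = slosC C v w := by
  have hlos : losC C (a • v) (b • w) = b * losC C v w := by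
    unfold losC
    rw [maxC_smul C w b hb.le, face_smul C v a ha,
      sInf_inner_smul b hb.le w _]
    ring
  have hran : ranC C (b • w) = b * ranC C w := by
    unfold ranC minC
    rw [maxC_smul C w b hb.le, sInf_inner_smul b hb.le w C]
    ring
  unfold slosC
  rw [hlos, hran, mul_div_mul_left _ _ hb.ne']

lemma fracMono (f r M U : ℝ) (hf : 0 ≤ f + r) (hM : 0 < M + r) (hMU : M ≤ U) :
    (M - f)/(M + r) ≤ (U - f)/(U + r) := by
  have hU : 0 < U + r := by linarith
  rw [div_le_div_iff₀ hM hU]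
  nlinarith

set_option maxHeartbeats 1000000 in
lemma core (n : ℕ) (α r ρ : ℝ) (hα0 : 0 < α) (hα1 : α < Real.pi / 2)
    (hr0 : 0 < r) (hr1 : r < 1) (hsr : Real.sin α ≤ r) (hrc : r ≤ Real.cos α)
    (hρ : ρ = Real.sqrt (1 - r ^ 2))
    (C : Set (EuclideanSpace ℝ (Fin n))) (hC : IsCompact C)
    (hCr : Metric.closedBall 0 r ⊆ C) (hC1 : C ⊆ Metric.closedBall 0 1)
    (v w : EuclideanSpace ℝ (Fin n)) (hv1 : ‖v‖ = 1) (hw1 : ‖w‖ = 1)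
    (hangle : ⟪v, w⟫ = Real.cos α) :
    slosC C v w ≤ 2 * ρ * Real.sin α
      / (r * (1 + Real.cos α) + ρ * Real.sin α) := by
  set c := Real.cos α with hc'
  set s := Real.sin α with hs'
  have hs0 : 0 < s := Real.sin_pos_of_pos_of_lt_pi hα0 (by linarith [Real.pi_pos])
  have hc0 : 0 < c := Real.cos_pos_of_mem_Ioo ⟨by linarith [Real.pi_pos], hα1⟩
  have hcs : c^2 + s^2 = 1 := by rw [hc', hs']; rw [add_comm]; exact Real.sin_sq_add_cos_sq α
  have hρ0 : 0 ≤ ρ := hρ ▸ Real.sqrt_nonneg _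
  have hρsq : ρ^2 = 1 - r^2 := by rw [hρ]; exact Real.sq_sqrt (by nlinarith)
  have hc1 : c ≤ 1 := Real.cos_le_one α
  have hsρ : s ≤ ρ := by
    have : s^2 ≤ ρ^2 := by nlinarith
    nlinarith
  have hρc : ρ ≤ c := by
    have : ρ^2 ≤ c^2 := by nlinarith
    nlinarith
  -- denominators of the target
  have hDen : 0 < r * (1 + c) + ρ * s := by positivity
  have hBnn : 0 ≤ 2 * ρ * s / (r * (1 + c) + ρ * s) := by positivity
  -- membership facts
  have hmemr : ∀ u : EuclideanSpace ℝ (Fin n), ‖u‖ = 1 → ∀ a : ℝ, |a| ≤ r → a • u ∈ C := by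
    intro u hu a ha
    apply hCr
    rw [Metric.mem_closedBall, dist_zero_right, norm_smul, hu, mul_one, Real.norm_eq_abs]
    exact ha
  have hnorm1 : ∀ x ∈ C, ‖x‖ ≤ 1 := by
    intro x hx
    have := hC1 hx
    rwa [Metric.mem_closedBall, dist_zero_right] at this
  -- continuity
  have contI : ∀ u : EuclideanSpace ℝ (Fin n), Continuous fun x => ⟪u, x⟫ :=
    fun u => continuous_const.inner continuous_id
  have hCne : C.Nonempty := ⟨0, hCr (by simp [hr0.le])⟩
  have hbddA : ∀ u : EuclideanSpace ℝ (Fin n), BddAbove ((fun x => ⟪u, x⟫) '' C) :=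
    fun u => (hC.image (contI u)).bddAbove
  have hbddB : ∀ u : EuclideanSpace ℝ (Fin n), BddBelow ((fun x => ⟪u, x⟫) '' C) :=
    fun u => (hC.image (contI u)).bddBelow
  -- basic bounds on maxC
  have hmax_le : ∀ u : EuclideanSpace ℝ (Fin n), ‖u‖ = 1 → maxC C u ≤ 1 := by
    intro u hu
    apply csSup_le (hCne.image _)
    rintro y ⟨x, hx, rfl⟩
    calc ⟪u, x⟫ ≤ ‖u‖ * ‖x‖ := real_inner_le_norm u x
      _ ≤ 1 := by rw [hu, one_mul]; exact hnorm1 x hx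
  have hmax_ge : ∀ u : EuclideanSpace ℝ (Fin n), ‖u‖ = 1 → r ≤ maxC C u := by
    intro u hu
    have hmem : r • u ∈ C := hmemr u hu r (by rw [abs_of_pos hr0])
    have : ⟪u, r • u⟫ = r := by
      rw [real_inner_smul_right, real_inner_self_eq_norm_sq, hu]; ring
    calc r = ⟪u, r • u⟫ := this.symm
      _ ≤ maxC C u := le_csSup (hbddA u) ⟨r • u, hmem, rfl⟩
  have hMv1 : maxC C v ≤ 1 := hmax_le v hv1
  have hMvr : r ≤ maxC C v := hmax_ge v hv1
  have hMw1 : maxC C w ≤ 1 := hmax_le w hw1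
  have hMwr : r ≤ maxC C w := hmax_ge w hw1
  -- minC C w ≤ -r
  have hminw : minC C w ≤ -r := by
    have hmem : (-r) • w ∈ C := hmemr w hw1 (-r) (by rw [abs_neg, abs_of_pos hr0])
    have he : ⟪w, (-r) • w⟫ = -r := by
      rw [real_inner_smul_right, real_inner_self_eq_norm_sq, hw1]; ring
    calc minC C w ≤ ⟪w, (-r) • w⟫ := csInf_le (hbddB w) ⟨(-r) • w, hmem, rfl⟩
      _ = -r := he
  have hran : maxC C w + r ≤ ranC C w := by
    unfold ranC minC at *
    linarith
  have hranpos : 0 < ranC C w := by linarith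
  set t := maxC C v with ht'
  set q := Real.sqrt (1 - t^2) with hq'
  have hq0 : 0 ≤ q := Real.sqrt_nonneg _
  have hqsq : q^2 = 1 - t^2 := Real.sq_sqrt (by nlinarith)
  clear_value t q
  -- the face is nonempty
  obtain ⟨x₀, hx₀C, hx₀max⟩ := hC.exists_isMaxOn hCne (contI v).continuousOn
  have hgt : IsGreatest ((fun x => ⟪v, x⟫) '' C) ⟪v, x₀⟫ := by
    constructor
    · exact ⟨x₀, hx₀C, rfl⟩
    · rintro y ⟨x, hx, rfl⟩
      exact hx₀max hx
  have hx₀ : ⟪v, x₀⟫ = t := by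
    rw [ht']
    exact hgt.csSup_eq.symm
  set F := {x ∈ C | ⟪v, x⟫ = maxC C v} with hF'
  have hFne : F.Nonempty := ⟨x₀, hx₀C, hx₀.trans ht'⟩
  -- lower bound on inf over face
  have hface : ∀ x ∈ F, c * t - s * q ≤ ⟪w, x⟫ := by
    intro x hx
    obtain ⟨hxC, hxv⟩ := hx
    have hb := ptBound c s hs0.le hcs v w x hv1 hw1 hangle (hnorm1 x hxC)
    rw [hxv, ← ht', ← hq'] at hb
    have habs := abs_le.1 hb
    linarith [habs.1]
  have hmF : c * t - s * q ≤ sInf ((fun x => ⟪w, x⟫) '' F) := by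
    apply le_csInf (hFne.image _)
    rintro y ⟨x, hx, rfl⟩
    exact hface x hx
  have hlos : losC C v w ≤ maxC C w - (c * t - s * q) := by
    unfold losC
    rw [← hF']
    linarith
  -- dispose of the trivial case
  rcases le_or_gt (losC C v w) 0 with hneg | hpos
  · calc slosC C v w ≤ 0 := div_nonpos_of_nonpos_of_nonneg hneg hranpos.le
      _ ≤ _ := hBnn
  -- main case
  have step1 : slosC C v w ≤ losC C v w / (maxC C w + r) := by
    unfold slosC
    exact div_le_div_of_nonneg_left hpos.le (by linarith) hran
  have hq_le : q ≤ ρ := by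
    rw [hq', hρ]
    exact Real.sqrt_le_sqrt (by
      nlinarith only [mul_self_le_mul_self hr0.le hMvr, sq_nonneg t, sq_nonneg r])
  have hfr : 0 ≤ (c * t - s * q) + r := by
    have h1 : s * q ≤ r * c := mul_le_mul hsr (hq_le.trans hρc) hq0 hr0.le
    have h2 : c * r ≤ c * t := mul_le_mul_of_nonneg_left hMvr hc0.le
    linarith only [h1, h2, hr0, mul_comm c r, mul_comm r c]
  have step2 : losC C v w / (maxC C w + r) ≤
      (maxC C w - (c * t - s * q)) / (maxC C w + r) :=
    div_le_div_of_nonneg_right hlos (by linarith)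
  rcases le_or_gt c t with hct | htc
  -- Case A : t ≥ c
  · have hqs : q ≤ s := by
      rw [hq']
      calc Real.sqrt (1 - t^2) ≤ Real.sqrt (s^2) := by
            apply Real.sqrt_le_sqrt
            nlinarith only [mul_self_le_mul_self hc0.le hct, hcs]
        _ = s := Real.sqrt_sq hs0.le
    have step3 : (maxC C w - (c * t - s * q)) / (maxC C w + r) ≤
        (1 - (c * t - s * q)) / (1 + r) :=
      fracMono (c * t - s * q) r (maxC C w) 1 hfr (by linarith) hMw1
    have step4 : (1 - (c * t - s * q)) / (1 + r) ≤ 2 * s^2 / (1 + r) := by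
      apply div_le_div_of_nonneg_right _ (by linarith : (0:ℝ) ≤ 1 + r)
      linarith only [mul_le_mul_of_nonneg_left hct hc0.le,
        mul_le_mul_of_nonneg_left hqs hs0.le, hcs]
    have step5 : 2 * s^2 / (1 + r) ≤ 2 * ρ * s / (r * (1 + c) + ρ * s) := by
      have e1 : s*r ≤ ρ*r := mul_le_mul_of_nonneg_right hsρ hr0.le
      have e2 : s*r ≤ ρ*c := mul_le_mul hsρ hrc hr0.le hρ0
      have e3 : s*r*c ≤ ρ*c*c := mul_le_mul_of_nonneg_right e2 hc0.le
      have e4 : ρ*c^2 + ρ*s^2 = ρ := by linear_combination ρ*hcs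
      have key : s*(r*(1+c)+ρ*s) ≤ ρ*(1+r) := by linarith only [e1, e3, e4]
      rw [div_le_div_iff₀ (by linarith) hDen]
      linarith only [mul_le_mul_of_nonneg_left key (by positivity : (0:ℝ) ≤ 2*s)]
    calc slosC C v w ≤ _ := step1
      _ ≤ _ := step2
      _ ≤ _ := step3
      _ ≤ _ := step4
      _ ≤ _ := step5
  -- Case B : t < c
  · have hMwU : maxC C w ≤ c * t + s * q := by
      apply csSup_le (hCne.image _)
      rintro y ⟨x, hx, rfl⟩
      have h1 := ptBound c s hs0.le hcs v w x hv1 hw1 hangle (hnorm1 x hx)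
      have h2 : ⟪v, x⟫ ≤ t := by
        rw [ht']; exact le_csSup (hbddA v) ⟨x, hx, rfl⟩
      have h3 : -1 ≤ ⟪v, x⟫ := by
        have := abs_real_inner_le_norm v x
        have hn := hnorm1 x hx
        rw [hv1, one_mul] at this
        have := abs_le.1 this
        linarith [this.1]
      have h4 := monoCS c s ⟪v, x⟫ t hs0.le hc0.le hcs h3 h2 htc.le
      have := abs_le.1 h1
      rw [← hq'] at h4
      linarith [this.2]
    have step3 : (maxC C w - (c * t - s * q)) / (maxC C w + r) ≤
        ((c * t + s * q) - (c * t - s * q)) / ((c * t + s * q) + r) :=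
      fracMono (c * t - s * q) r (maxC C w) (c * t + s * q) hfr (by linarith) hMwU
    have step4 : ((c * t + s * q) - (c * t - s * q)) / ((c * t + s * q) + r) ≤
        2 * ρ * s / (r * (1 + c) + ρ * s) := by
      have hD2 : 0 < (c * t + s * q) + r := by
        have : 0 ≤ c * t := by nlinarith
        have : 0 ≤ s * q := by positivity
        linarith
      have f1 : q*r ≤ ρ*r := mul_le_mul_of_nonneg_right hq_le hr0.le
      have g1 : q*r ≤ ρ*t := mul_le_mul hq_le hMvr hr0.le hρ0
      have f2 : q*r*c ≤ ρ*t*c := mul_le_mul_of_nonneg_right g1 hc0.le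
      have key : q*(r*(1+c)+ρ*s) ≤ ρ*((c*t+s*q)+r) := by linarith only [f1, f2]
      rw [div_le_div_iff₀ hD2 hDen]
      linarith only [mul_le_mul_of_nonneg_left key (by positivity : (0:ℝ) ≤ 2*s)]
    calc slosC C v w ≤ _ := step1
      _ ≤ _ := step2
      _ ≤ _ := step3
      _ ≤ _ := step4

theorem stmt5 (n : ℕ) (α r ρ : ℝ) (hα0 : 0 < α) (hα1 : α < Real.pi / 2)
    (hr0 : 0 < r) (hr1 : r < 1) (hsr : Real.sin α ≤ r) (hrc : r ≤ Real.cos α)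
    (hρ : ρ = Real.sqrt (1 - r ^ 2))
    (C : Set (EuclideanSpace ℝ (Fin n))) (hC : IsCompact C)
    (hCr : Metric.closedBall 0 r ⊆ C) (hC1 : C ⊆ Metric.closedBall 0 1)
    (v w : EuclideanSpace ℝ (Fin n)) (hv : v ≠ 0) (hw : w ≠ 0)
    (hangle : ⟪v, w⟫ = ‖v‖ * ‖w‖ * Real.cos α) :
    slosC C v w ≤ 2 * ρ * Real.sin α
      / (r * (1 + Real.cos α) + ρ * Real.sin α) := by
  have ha : 0 < ‖v‖ := norm_pos_iff.2 hv
  have hb : 0 < ‖w‖ := norm_pos_iff.2 hw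
  have h1 : slosC C (‖v‖⁻¹ • v) (‖w‖⁻¹ • w) = slosC C v w :=
    slosC_smul C v w _ _ (inv_pos.2 ha) (inv_pos.2 hb)
  rw [← h1]
  apply core n α r ρ hα0 hα1 hr0 hr1 hsr hrc hρ C hC hCr hC1
  · rw [norm_smul, norm_inv, norm_norm, inv_mul_cancel₀ ha.ne']
  · rw [norm_smul, norm_inv, norm_norm, inv_mul_cancel₀ hb.ne']
  · rw [real_inner_smul_left, real_inner_smul_right, hangle]
    field_simp
end

section
/- Let 0 < α < π/2 and 0 < r < 1 with sin α ≤ r ≤ cos α, ρ := √(1 - r²). Let C ⊆ R² be the convex hull of {(-ρ, r), (ρ, r)} ∪ rB², v = (0,1), w = (sin α, cos α). Then los(v,w) = 2ρ sin α and ran(w) = r(1 + cos α) + ρ sin α, so slos(v,w) = 2ρ sin α / (r(1 + cos α) + ρ sin α) (i.e., the worst-case bound is tight). -/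
open scoped RealInnerProductSpace

lemma inner_halfspace_le {n : ℕ} {S : Set (EuclideanSpace ℝ (Fin n))}
    {v : EuclideanSpace ℝ (Fin n)} {c : ℝ} (hub : ∀ x ∈ S, ⟪v, x⟫ ≤ c) :
    ∀ x ∈ convexHull ℝ S, ⟪v, x⟫ ≤ c := by
  intro x hx
  have : convexHull ℝ S ⊆ {x | ⟪v, x⟫ ≤ c} :=
    convexHull_min hub (convex_halfSpace_le
      ⟨fun a b => inner_add_right v a b, fun t a => real_inner_smul_right v a t⟩ c)
  exact this hx

lemma inner_halfspace_ge {n : ℕ} {S : Set (EuclideanSpace ℝ (Fin n))}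
    {v : EuclideanSpace ℝ (Fin n)} {c : ℝ} (hlb : ∀ x ∈ S, c ≤ ⟪v, x⟫) :
    ∀ x ∈ convexHull ℝ S, c ≤ ⟪v, x⟫ := by
  intro x hx
  have : convexHull ℝ S ⊆ {x | c ≤ ⟪v, x⟫} :=
    convexHull_min hlb (convex_halfSpace_ge
      ⟨fun a b => inner_add_right v a b, fun t a => real_inner_smul_right v a t⟩ c)
  exact this hx

lemma isGreatest_hull {n : ℕ} {S : Set (EuclideanSpace ℝ (Fin n))}
    {v : EuclideanSpace ℝ (Fin n)} {c : ℝ}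
    (hub : ∀ x ∈ S, ⟪v, x⟫ ≤ c) (hmem : ∃ x ∈ S, ⟪v, x⟫ = c) :
    IsGreatest ((fun x => (⟪v, x⟫ : ℝ)) '' convexHull ℝ S) c := by
  obtain ⟨x, hxS, hxc⟩ := hmem
  exact ⟨⟨x, subset_convexHull ℝ S hxS, hxc⟩,
    by rintro y ⟨z, hz, rfl⟩; exact inner_halfspace_le hub z hz⟩

lemma isLeast_hull {n : ℕ} {S : Set (EuclideanSpace ℝ (Fin n))}
    {v : EuclideanSpace ℝ (Fin n)} {c : ℝ}
    (hlb : ∀ x ∈ S, c ≤ ⟪v, x⟫) (hmem : ∃ x ∈ S, ⟪v, x⟫ = c) :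
    IsLeast ((fun x => (⟪v, x⟫ : ℝ)) '' convexHull ℝ S) c := by
  obtain ⟨x, hxS, hxc⟩ := hmem
  exact ⟨⟨x, subset_convexHull ℝ S hxS, hxc⟩,
    by rintro y ⟨z, hz, rfl⟩; exact inner_halfspace_ge hlb z hz⟩

set_option maxHeartbeats 2000000 in
theorem stmt6 (α r ρ : ℝ) (hα0 : 0 < α) (hα1 : α < Real.pi / 2)
    (hr0 : 0 < r) (hr1 : r < 1) (hsr : Real.sin α ≤ r) (hrc : r ≤ Real.cos α)
    (hρ : ρ = Real.sqrt (1 - r ^ 2))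
    (p q v w : EuclideanSpace ℝ (Fin 2))
    (hp : p = (WithLp.equiv 2 (Fin 2 → ℝ)).symm ![-ρ, r])
    (hq : q = (WithLp.equiv 2 (Fin 2 → ℝ)).symm ![ρ, r])
    (hv : v = (WithLp.equiv 2 (Fin 2 → ℝ)).symm ![0, 1])
    (hw : w = (WithLp.equiv 2 (Fin 2 → ℝ)).symm ![Real.sin α, Real.cos α])
    (C : Set (EuclideanSpace ℝ (Fin 2)))
    (hC : C = convexHull ℝ ({p, q} ∪ Metric.closedBall 0 r)) :
    losC C v w = 2 * ρ * Real.sin α ∧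
    ranC C w = r * (1 + Real.cos α) + ρ * Real.sin α ∧
    slosC C v w = 2 * ρ * Real.sin α
      / (r * (1 + Real.cos α) + ρ * Real.sin α) := by
  have hπ : α < Real.pi := by linarith [Real.pi_pos]
  have hs : 0 < Real.sin α := Real.sin_pos_of_pos_of_lt_pi hα0 hπ
  have hc : 0 < Real.cos α := lt_of_lt_of_le hr0 hrc
  have hpyth : Real.sin α ^ 2 + Real.cos α ^ 2 = 1 := Real.sin_sq_add_cos_sq α
  have hρ2 : ρ ^ 2 = 1 - r ^ 2 := by rw [hρ]; exact Real.sq_sqrt (by nlinarith)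
  have hρ0 : 0 < ρ := by rw [hρ]; exact Real.sqrt_pos.mpr (by nlinarith)
  have hρ1 : ρ ≤ 1 := by nlinarith
  have hρs : Real.sin α ≤ ρ := by nlinarith
  -- inner products with generic x
  have hvx : ∀ x : EuclideanSpace ℝ (Fin 2), (⟪v, x⟫ : ℝ) = x 1 := by
    intro x; rw [hv]; simp [PiLp.inner_apply, Fin.sum_univ_two]
  have hwx : ∀ x : EuclideanSpace ℝ (Fin 2),
      (⟪w, x⟫ : ℝ) = Real.sin α * x 0 + Real.cos α * x 1 := by
    intro x; rw [hw]; simp [PiLp.inner_apply, Fin.sum_univ_two]; ring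
  have hpx : ∀ x : EuclideanSpace ℝ (Fin 2), (⟪p, x⟫ : ℝ) = -ρ * x 0 + r * x 1 := by
    intro x; rw [hp]; simp [PiLp.inner_apply, Fin.sum_univ_two]; ring
  have hp0 : p 0 = -ρ := by rw [hp]; simp
  have hp1 : p 1 = r := by rw [hp]; simp
  have hq0 : q 0 = ρ := by rw [hq]; simp
  have hq1 : q 1 = r := by rw [hq]; simp
  have hnw : ‖w‖ = 1 := by
    rw [hw, EuclideanSpace.norm_eq]
    simp only [Fin.sum_univ_two, WithLp.equiv_symm_apply, PiLp.toLp_apply, Matrix.cons_val_zero,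
      Matrix.cons_val_one, Matrix.head_cons, Real.norm_eq_abs, sq_abs]
    rw [show Real.sin α ^ 2 + Real.cos α ^ 2 = 1 from hpyth]
    exact Real.sqrt_one
  have hnv : ‖v‖ = 1 := by
    rw [hv, EuclideanSpace.norm_eq]
    simp [Fin.sum_univ_two]
  have hnp : ‖p‖ = 1 := by
    rw [hp, EuclideanSpace.norm_eq]
    simp only [Fin.sum_univ_two, WithLp.equiv_symm_apply, PiLp.toLp_apply, Matrix.cons_val_zero,
      Matrix.cons_val_one, Matrix.head_cons, Real.norm_eq_abs, sq_abs]
    rw [show (-ρ) ^ 2 + r ^ 2 = 1 by nlinarith]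
    exact Real.sqrt_one
  set S : Set (EuclideanSpace ℝ (Fin 2)) := {p, q} ∪ Metric.closedBall 0 r with hS
  have hmemS : ∀ x ∈ S, x = p ∨ x = q ∨ ‖x‖ ≤ r := by
    intro x hx
    rcases hx with hx | hx
    · rcases hx with hx | hx
      · exact Or.inl hx
      · exact Or.inr (Or.inl hx)
    · exact Or.inr (Or.inr (mem_closedBall_zero_iff.mp hx))
  have hpS : p ∈ S := Or.inl (Set.mem_insert p {q})
  have hqS : q ∈ S := Or.inl (Set.mem_insert_of_mem p rfl)
  -- maxC C v = r
  have hmaxv : maxC C v = r := by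
    rw [hC]
    refine (isGreatest_hull ?_ ⟨p, hpS, ?_⟩).csSup_eq
    · intro x hx
      rcases hmemS x hx with rfl | rfl | hb
      · rw [hvx, hp1]
      · rw [hvx, hq1]
      · calc (⟪v, x⟫ : ℝ) ≤ ‖v‖ * ‖x‖ := real_inner_le_norm v x
          _ ≤ r := by rw [hnv]; linarith
    · rw [hvx, hp1]
  -- maxC C w = ρ sin α + r cos α
  have hmaxw : maxC C w = ρ * Real.sin α + r * Real.cos α := by
    rw [hC]
    refine (isGreatest_hull ?_ ⟨q, hqS, ?_⟩).csSup_eq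
    · intro x hx
      rcases hmemS x hx with rfl | rfl | hb
      · rw [hwx, hp0, hp1]; nlinarith
      · rw [hwx, hq0, hq1]; ring_nf; rfl
      · calc (⟪w, x⟫ : ℝ) ≤ ‖w‖ * ‖x‖ := real_inner_le_norm w x
          _ ≤ r := by rw [hnw]; linarith
          _ ≤ _ := by
            have f1 : Real.sin α * Real.sin α ≤ ρ * Real.sin α :=
              mul_le_mul_of_nonneg_right hρs (le_of_lt hs)
            have f2 : (0:ℝ) ≤ (1 - Real.cos α) * (1 + Real.cos α - r) :=
              mul_nonneg (by linarith [Real.cos_le_one α]) (by linarith)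
            nlinarith [f1, f2, hpyth]
    · rw [hwx, hq0, hq1]; ring
  -- minC C w = -r
  have hminw : minC C w = -r := by
    rw [hC]
    refine (isLeast_hull ?_ ⟨(-r) • w, ?_, ?_⟩).csInf_eq
    · intro x hx
      rcases hmemS x hx with rfl | rfl | hb
      · rw [hwx, hp0, hp1]; nlinarith
      · rw [hwx, hq0, hq1]; nlinarith
      · have h1 : |(⟪w, x⟫ : ℝ)| ≤ ‖w‖ * ‖x‖ := abs_real_inner_le_norm w x
        rw [hnw] at h1
        have := neg_abs_le (⟪w, x⟫ : ℝ)
        nlinarith [abs_nonneg (⟪w, x⟫ : ℝ)]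
    · refine Or.inr (mem_closedBall_zero_iff.mpr ?_)
      rw [norm_smul, hnw, Real.norm_eq_abs, abs_neg, abs_of_pos hr0]; linarith
    · rw [real_inner_smul_right, real_inner_self_eq_norm_sq, hnw]; ring
  -- sInf over the face
  have hsupp : ∀ x ∈ C, (⟪p, x⟫ : ℝ) ≤ 1 := by
    rw [hC]
    apply inner_halfspace_le
    intro x hx
    rcases hmemS x hx with rfl | rfl | hb
    · rw [hpx, hp0, hp1]; nlinarith
    · rw [hpx, hq0, hq1]; nlinarith
    · calc (⟪p, x⟫ : ℝ) ≤ ‖p‖ * ‖x‖ := real_inner_le_norm p x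
        _ ≤ r := by rw [hnp]; linarith
        _ ≤ 1 := le_of_lt hr1
  have hpC : p ∈ C := by rw [hC]; exact subset_convexHull ℝ S hpS
  have hface : sInf ((fun x => (⟪w, x⟫ : ℝ)) '' {x ∈ C | ⟪v, x⟫ = maxC C v})
      = r * Real.cos α - ρ * Real.sin α := by
    refine IsLeast.csInf_eq ⟨⟨p, ⟨hpC, by rw [hvx, hp1, hmaxv]⟩, ?_⟩, ?_⟩
    · show (⟪w, p⟫ : ℝ) = _
      rw [hwx, hp0, hp1]; ring
    · rintro y ⟨x, ⟨hxC, hxf⟩, rfl⟩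
      show _ ≤ (⟪w, x⟫ : ℝ)
      have h1 : -ρ * x 0 + r * x 1 ≤ 1 := by rw [← hpx]; exact hsupp x hxC
      rw [hvx, hmaxv] at hxf
      rw [hwx, hxf]
      rw [hxf] at h1
      have hx0 : -ρ ≤ x 0 := by nlinarith
      nlinarith
  have hlos : losC C v w = 2 * ρ * Real.sin α := by
    unfold losC
    rw [hmaxw, hface]; ring
  have hran : ranC C w = r * (1 + Real.cos α) + ρ * Real.sin α := by
    unfold ranC minC
    unfold minC at hminw
    rw [hmaxw, hminw]; ring
  exact ⟨hlos, hran, by unfold slosC; rw [hlos, hran]⟩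
end

section
/- For real s, σ, r with sin α ≤ r ≤ s ≤ cos α, σ = √(1 - s²), ρ = √(1 - r²), and 0 < α < π/2: 2σ sin α / (σ sin α + s cos α + r) ≤ 2ρ sin α / (ρ sin α + r cos α + r). -/
theorem stmt8 (α r s σ ρ : ℝ) (hα0 : 0 < α) (hα1 : α < Real.pi / 2)
    (hsr : Real.sin α ≤ r) (hrs : r ≤ s) (hsc : s ≤ Real.cos α)
    (hσ : σ = Real.sqrt (1 - s ^ 2)) (hρ : ρ = Real.sqrt (1 - r ^ 2)) :
    2 * σ * Real.sin α / (σ * Real.sin α + s * Real.cos α + r)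
      ≤ 2 * ρ * Real.sin α / (ρ * Real.sin α + r * Real.cos α + r) := by
  have hpi := Real.pi_pos
  have hsin : 0 < Real.sin α := Real.sin_pos_of_pos_of_lt_pi hα0 (by linarith)
  have hcos : 0 < Real.cos α := Real.cos_pos_of_mem_Ioo ⟨by linarith, hα1⟩
  have hr : 0 < r := lt_of_lt_of_le hsin hsr
  have hs : 0 < s := lt_of_lt_of_le hr hrs
  have hσ0 : 0 ≤ σ := hσ ▸ Real.sqrt_nonneg _
  have hρ0 : 0 ≤ ρ := hρ ▸ Real.sqrt_nonneg _
  have hσρ : σ ≤ ρ := by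
    rw [hσ, hρ]
    apply Real.sqrt_le_sqrt
    nlinarith
  have hd1 : 0 < σ * Real.sin α + s * Real.cos α + r := by positivity
  have hd2 : 0 < ρ * Real.sin α + r * Real.cos α + r := by positivity
  rw [div_le_div_iff₀ hd1 hd2]
  have h1 : σ * r ≤ ρ * s := by nlinarith
  have h2 : σ * r ≤ ρ * r := by nlinarith
  nlinarith [mul_le_mul_of_nonneg_right h1 hcos.le,
    mul_le_mul_of_nonneg_right h2 hsin.le,
    mul_pos hsin hcos]
end

section
/- For 0 < α < π/2 and 0 < r ≤ cos α with ρ := √(1 - r²) and sin α ≤ r: (1 + sin²α - cos²α)/(1 + r) ≤ 2ρ sin α/(r cos α + ρ sin α + r). -/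
theorem stmt9 (α r ρ : ℝ) (hα0 : 0 < α) (hα1 : α < Real.pi / 2)
    (hr0 : 0 < r) (hrc : r ≤ Real.cos α) (hsr : Real.sin α ≤ r)
    (hρ : ρ = Real.sqrt (1 - r ^ 2)) :
    (1 + Real.sin α ^ 2 - Real.cos α ^ 2) / (1 + r)
      ≤ 2 * ρ * Real.sin α / (r * Real.cos α + ρ * Real.sin α + r) := by
  have hs : 0 < Real.sin α := Real.sin_pos_of_pos_of_lt_pi hα0 (by linarith [Real.pi_pos])
  have hc : 0 < Real.cos α := Real.cos_pos_of_mem_Ioo ⟨by linarith [Real.pi_pos], hα1⟩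
  have hpyth := Real.sin_sq_add_cos_sq α
  have h1r : 1 - r ^ 2 ≥ Real.sin α ^ 2 := by nlinarith
  have hρ2 : ρ ^ 2 = 1 - r ^ 2 := by
    rw [hρ]; exact Real.sq_sqrt (by nlinarith)
  have hρs : Real.sin α ≤ ρ := by
    rw [hρ]
    calc Real.sin α = Real.sqrt (Real.sin α ^ 2) := by
          rw [Real.sqrt_sq hs.le]
      _ ≤ Real.sqrt (1 - r ^ 2) := Real.sqrt_le_sqrt h1r
  have hρ0 : 0 < ρ := lt_of_lt_of_le hs hρs
  have hcs : r * Real.cos α + ρ * Real.sin α ≤ 1 := by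
    nlinarith [sq_nonneg (r - Real.cos α), sq_nonneg (ρ - Real.sin α)]
  have hden : 0 < r * Real.cos α + ρ * Real.sin α + r := by positivity
  have hLHS : 1 + Real.sin α ^ 2 - Real.cos α ^ 2 = 2 * Real.sin α ^ 2 := by
    nlinarith
  rw [hLHS, div_le_div_iff₀ (by linarith) hden]
  nlinarith [mul_le_mul_of_nonneg_left hcs hs.le, mul_le_mul_of_nonneg_right hρs hr0.le]
end
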